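/- Let ψ₀ ∈ ℝ and define six ring lights at elevation 45° by l_k = (cos(ψ₀ + kπ/3)/√2, sin(ψ₀ + kπ/3)/√2, 1/√2) for k = 0, 1, …, 5. Then for every unit vector n ∈ ℝ³ with n₃ > 0, the number of indices k ∈ {0, …, 5} with ⟪n, l_k⟫ > 0 is at least 3. That is, six uniformly spaced ring lights at elevation 45° illuminate every point of the open upper hemisphere at least three times. -/
import Mathlib


open scoped RealInnerProductSpace Classical

/-- The ring light at azimuth `θ` at elevation 45°:
`l(θ) = (cos θ/√2, sin θ/√2, 1/√2)`. -/
noncomputable def ringLight (θ : ℝ) : EuclideanSpace ℝ (Fin 3) :=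
  (EuclideanSpace.equiv (Fin 3) ℝ).symm
    ![Real.cos θ / Real.sqrt 2, Real.sin θ / Real.sqrt 2, 1 / Real.sqrt 2]

lemma inner_ringLight (n : EuclideanSpace ℝ (Fin 3)) (θ : ℝ) :
    ⟪n, ringLight θ⟫ = (n 0 * Real.cos θ + n 1 * Real.sin θ + n 2) / Real.sqrt 2 := by
  simp [ringLight, PiLp.inner_apply, Fin.sum_univ_three, EuclideanSpace.equiv]
  ring

/-- Six uniformly spaced ring lights at elevation 45° (azimuths
`ψ₀ + kπ/3`, `k = 0, …, 5`) illuminate every unit normal of the open upper hemisphere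
at least three times. -/
theorem six_ring_lights_triple_illumination (ψ₀ : ℝ) (n : EuclideanSpace ℝ (Fin 3))
    (hn : ‖n‖ = 1) (hn3 : 0 < n 2) :
    3 ≤ ((Finset.range 6).filter
        (fun k : ℕ => 0 < ⟪n, ringLight (ψ₀ + k * Real.pi / 3)⟫)).card := by
  have h2 : (0:ℝ) < Real.sqrt 2 := by positivity
  set g : ℕ → ℝ := fun k =>
    n 0 * Real.cos (ψ₀ + k * Real.pi / 3) + n 1 * Real.sin (ψ₀ + k * Real.pi / 3) with hg
  have hP : ∀ k : ℕ, (0 < ⟪n, ringLight (ψ₀ + k * Real.pi / 3)⟫) ↔ 0 < g k + n 2 := by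
    intro k
    rw [inner_ringLight, div_pos_iff]
    simp only [hg]
    constructor
    · rintro (⟨h, _⟩ | ⟨_, h⟩)
      · linarith
      · linarith
    · intro h
      exact Or.inl ⟨by linarith, h2⟩
  have hpair : ∀ k : ℕ, g (k + 3) = - g k := by
    intro k
    have hθ : ψ₀ + (↑(k + 3) : ℝ) * Real.pi / 3 = (ψ₀ + k * Real.pi / 3) + Real.pi := by
      push_cast; ring
    simp only [hg, hθ, Real.cos_add_pi, Real.sin_add_pi]
    ring
  have key : ∀ k : ℕ, 0 < g k + n 2 ∨ 0 < g (k + 3) + n 2 := by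
    intro k
    by_contra h
    push_neg at h
    have := hpair k
    linarith [h.1, h.2]
  have main : ∀ a b c : ℕ, a < 6 → b < 6 → c < 6 → a ≠ b → a ≠ c → b ≠ c →
      0 < g a + n 2 → 0 < g b + n 2 → 0 < g c + n 2 →
      3 ≤ ((Finset.range 6).filter
        (fun k : ℕ => 0 < ⟪n, ringLight (ψ₀ + k * Real.pi / 3)⟫)).card := by
    intro a b c ha hb hc hab hac hbc pa pb pc
    have hsub : ({a, b, c} : Finset ℕ) ⊆ (Finset.range 6).filter
        (fun k : ℕ => 0 < ⟪n, ringLight (ψ₀ + k * Real.pi / 3)⟫) := by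
      simp only [Finset.insert_subset_iff, Finset.singleton_subset_iff, Finset.mem_filter,
        Finset.mem_range]
      exact ⟨⟨ha, (hP a).mpr pa⟩, ⟨hb, (hP b).mpr pb⟩, ⟨hc, (hP c).mpr pc⟩⟩
    have hcard : ({a, b, c} : Finset ℕ).card = 3 := by
      rw [Finset.card_insert_of_notMem (by simp [hab, hac]),
        Finset.card_insert_of_notMem (by simp [hbc]), Finset.card_singleton]
    calc 3 = ({a, b, c} : Finset ℕ).card := hcard.symm
      _ ≤ _ := Finset.card_le_card hsub
  rcases key 0 with h0 | h0 <;> rcases key 1 with h1 | h1 <;> rcases key 2 with h2' | h2'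
  · exact main 0 1 2 (by norm_num) (by norm_num) (by norm_num) (by norm_num) (by norm_num) (by norm_num) h0 h1 h2'
  · exact main 0 1 5 (by norm_num) (by norm_num) (by norm_num) (by norm_num) (by norm_num) (by norm_num) h0 h1 h2'
  · exact main 0 4 2 (by norm_num) (by norm_num) (by norm_num) (by norm_num) (by norm_num) (by norm_num) h0 h1 h2'
  · exact main 0 4 5 (by norm_num) (by norm_num) (by norm_num) (by norm_num) (by norm_num) (by norm_num) h0 h1 h2'
  · exact main 3 1 2 (by norm_num) (by norm_num) (by norm_num) (by norm_num) (by norm_num) (by norm_num) h0 h1 h2'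
  · exact main 3 1 5 (by norm_num) (by norm_num) (by norm_num) (by norm_num) (by norm_num) (by norm_num) h0 h1 h2'
  · exact main 3 4 2 (by norm_num) (by norm_num) (by norm_num) (by norm_num) (by norm_num) (by norm_num) h0 h1 h2'
  · exact main 3 4 5 (by norm_num) (by norm_num) (by norm_num) (by norm_num) (by norm_num) (by norm_num) h0 h1 h2'
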